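/- The transition probabilities P(β, β−a_j; x) = (Z_A(β−a_j;x)/Z_A(β;x)) · x_j/deg(β), j ∈ [m], form a probability distribution on [m]: each is nonnegative and they sum to 1, whenever β ∈ ℕA with deg(β) ≥ 1 and x ∈ ℝ^m_{>0}. -/

import Mathlib

open Finset

/-- The A-hypergeometric polynomial. -/
noncomputable def Zpoly {m : ℕ} (F : Finset (Fin m → ℕ)) (x : Fin m → ℝ) : ℝ :=
  ∑ v ∈ F, ∏ j, x j ^ (v j) / (Nat.factorial (v j) : ℝ)

/-- The transition probabilities
`P(β, β-a_j; x) = (Z_A(β-a_j;x)/Z_A(β;x)) · x_j / deg(β)` form a probability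
distribution on `[m]`: each is nonnegative and they sum to `1`. -/
theorem transition_probabilities_form_distribution {d m : ℕ}
    (A : Matrix (Fin d) (Fin m) ℤ)
    (c : Fin d → ℚ) (hc : ∀ j, ∑ i, c i * (A i j : ℚ) = 1)
    (β : Fin d → ℤ)
    (hβ : ∃ v : Fin m → ℕ, ∀ i, ∑ k, A i k * (v k : ℤ) = β i)
    (hdeg : 1 ≤ (∑ i, c i * (β i : ℚ)))
    (x : Fin m → ℝ) (hx : ∀ k, 0 < x k)
    (Fβ : Finset (Fin m → ℕ)) (Fj : Fin m → Finset (Fin m → ℕ))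
    (hFβ : ∀ v : Fin m → ℕ, v ∈ Fβ ↔ ∀ i, ∑ k, A i k * (v k : ℤ) = β i)
    (hFj : ∀ j, ∀ v : Fin m → ℕ,
      v ∈ Fj j ↔ ∀ i, ∑ k, A i k * (v k : ℤ) = β i - A i j) :
    (∀ j, 0 ≤ Zpoly (Fj j) x / Zpoly Fβ x * x j / ((∑ i, c i * (β i : ℚ) : ℚ) : ℝ))
    ∧ ∑ j, Zpoly (Fj j) x / Zpoly Fβ x * x j / ((∑ i, c i * (β i : ℚ) : ℚ) : ℝ) = 1 := by
  set D : ℝ := ((∑ i, c i * (β i : ℚ) : ℚ) : ℝ) with hDdef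
  have hD1 : (1 : ℝ) ≤ D := by rw [hDdef]; exact_mod_cast hdeg
  have hD0 : (0 : ℝ) < D := lt_of_lt_of_le one_pos hD1
  set t : (Fin m → ℕ) → ℝ := fun v => ∏ j, x j ^ (v j) / (Nat.factorial (v j) : ℝ)
    with htdef
  have htpos : ∀ v, 0 < t v := by
    intro v
    exact Finset.prod_pos fun j _ => div_pos (pow_pos (hx j) _)
      (by exact_mod_cast Nat.factorial_pos (v j))
  have hZ : ∀ F : Finset (Fin m → ℕ), Zpoly F x = ∑ v ∈ F, t v := fun F => rfl
  have hZnn : ∀ F : Finset (Fin m → ℕ), 0 ≤ Zpoly F x := fun F =>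
    Finset.sum_nonneg fun v _ => (htpos v).le
  obtain ⟨v0, hv0⟩ := hβ
  have hZβ : 0 < Zpoly Fβ x :=
    Finset.sum_pos (fun v _ => htpos v) ⟨v0, (hFβ v0).2 hv0⟩
  -- degree identity: for v ∈ Fβ, the total count equals D
  have deg_eq : ∀ v ∈ Fβ, ((∑ k, v k : ℕ) : ℝ) = D := by
    intro v hv
    have hv' := (hFβ v).1 hv
    have hq : (∑ i, c i * (β i : ℚ)) = ((∑ k, v k : ℕ) : ℚ) := by
      have h1 : ∀ i, (β i : ℚ) = ∑ k, (A i k : ℚ) * (v k : ℚ) := by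
        intro i
        rw [← hv' i]; push_cast; ring
      calc ∑ i, c i * (β i : ℚ) = ∑ i, ∑ k, c i * (A i k : ℚ) * (v k : ℚ) := by
            simp_rw [h1, Finset.mul_sum, mul_assoc]
        _ = ∑ k, (∑ i, c i * (A i k : ℚ)) * (v k : ℚ) := by
            rw [Finset.sum_comm]; simp_rw [Finset.sum_mul]
        _ = ((∑ k, v k : ℕ) : ℚ) := by simp [hc]
    rw [hDdef, hq]
    push_cast
    ring
  -- per-term step
  have step : ∀ (j : Fin m) (w : Fin m → ℕ),
      t w * x j = ((w j + 1 : ℕ) : ℝ) * t (fun k => w k + if k = j then 1 else 0) := by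
    intro j w
    have h1 : t w = (x j ^ (w j) / (Nat.factorial (w j) : ℝ)) *
        ∏ k ∈ Finset.univ.erase j, x k ^ (w k) / (Nat.factorial (w k) : ℝ) :=
      (Finset.mul_prod_erase Finset.univ _ (Finset.mem_univ j)).symm
    have h2 : t (fun k => w k + if k = j then 1 else 0) =
        (x j ^ (w j + 1) / (Nat.factorial (w j + 1) : ℝ)) *
        ∏ k ∈ Finset.univ.erase j, x k ^ (w k) / (Nat.factorial (w k) : ℝ) := by
      simp only [htdef]
      rw [← Finset.mul_prod_erase Finset.univ _ (Finset.mem_univ j)]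
      simp only [if_pos rfl]
      congr 1
      refine Finset.prod_congr rfl fun k hk => ?_
      simp [Finset.ne_of_mem_erase hk]
    rw [h1, h2]
    have hfac : (Nat.factorial (w j + 1) : ℝ) = ((w j + 1 : ℕ) : ℝ) * (Nat.factorial (w j) : ℝ) := by
      rw [Nat.factorial_succ]; push_cast; ring
    have hf0 : (Nat.factorial (w j) : ℝ) ≠ 0 := by
      exact_mod_cast (Nat.factorial_pos (w j)).ne'
    have hf1 : ((w j + 1 : ℕ) : ℝ) ≠ 0 := by positivity
    rw [hfac]
    field_simp
    ring
  -- bijection step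
  have key : ∀ j, Zpoly (Fj j) x * x j = ∑ v ∈ Fβ, (v j : ℝ) * t v := by
    intro j
    rw [hZ, Finset.sum_mul]
    have hbij : ∑ w ∈ Fj j, t w * x j =
        ∑ v ∈ Fβ.filter (fun v => v j ≠ 0), (v j : ℝ) * t v := by
      refine Finset.sum_nbij' (i := fun w => fun k => w k + if k = j then 1 else 0)
        (j := fun v => fun k => v k - if k = j then 1 else 0) ?_ ?_ ?_ ?_ ?_
      · intro w hw
        have hw' := (hFj j w).1 hw
        rw [Finset.mem_filter]
        constructor
        · rw [hFβ]
          intro i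
          have : ∀ k : Fin m, ((w k + if k = j then 1 else 0 : ℕ) : ℤ)
              = (w k : ℤ) + if k = j then 1 else 0 := by
            intro k; by_cases h : k = j <;> simp [h]
          simp_rw [this, mul_add, Finset.sum_add_distrib, hw' i]
          have : ∑ k, A i k * (if k = j then (1:ℤ) else 0) = A i j := by
            simp [mul_ite]
          rw [this]; ring
        · simp
      · intro v hv
        rw [Finset.mem_filter] at hv
        obtain ⟨hv1, hv2⟩ := hv
        have hv1' := (hFβ v).1 hv1
        have hvj : 1 ≤ v j := Nat.one_le_iff_ne_zero.mpr hv2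
        rw [hFj]
        intro i
        have hcast : ∀ k : Fin m, ((v k - if k = j then 1 else 0 : ℕ) : ℤ)
            = (v k : ℤ) - if k = j then 1 else 0 := by
          intro k
          by_cases h : k = j
          · subst h; simp [Nat.cast_sub hvj]
          · simp [h]
        simp_rw [hcast, mul_sub, Finset.sum_sub_distrib, hv1' i]
        have : ∑ k, A i k * (if k = j then (1:ℤ) else 0) = A i j := by
          simp [mul_ite]
        rw [this]
      · intro w hw
        funext k
        by_cases h : k = j <;> simp [h]
      · intro v hv
        rw [Finset.mem_filter] at hv
        have hvj : 1 ≤ v j := Nat.one_le_iff_ne_zero.mpr hv.2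
        funext k
        by_cases h : k = j
        · subst h; simp [Nat.sub_add_cancel hvj]
        · simp [h]
      · intro w hw
        rw [step j w]
        congr 1
        simp
    rw [hbij]
    exact Finset.sum_filter_of_ne (fun v hv hne => by
      intro h0
      apply hne
      rw [h0]
      simp)
  have main : ∑ j, Zpoly (Fj j) x * x j = D * Zpoly Fβ x := by
    simp_rw [key]
    rw [Finset.sum_comm]
    rw [hZ, Finset.mul_sum]
    refine Finset.sum_congr rfl fun v hv => ?_
    rw [← Finset.sum_mul]
    rw [← deg_eq v hv]
    push_cast
    ring
  constructor
  · intro j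
    exact div_nonneg (mul_nonneg (div_nonneg (hZnn _) hZβ.le) (hx j).le) hD0.le
  · have hterm : ∀ j : Fin m, Zpoly (Fj j) x / Zpoly Fβ x * x j / D
        = Zpoly (Fj j) x * x j * (Zpoly Fβ x * D)⁻¹ := by
      intro j
      field_simp
    simp_rw [hterm]
    rw [← Finset.sum_mul, main]
    field_simp
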